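/- Let n ∈ ℕ, let f : 2^[n] → ℝ≥0 be a set function, let α ≥ 1, and let D be a probability distribution on 2^[n]. There is an absolute constant C > 0 such that for all ε, δ ∈ (0,1) and every integer m ≥ C·(1/ε)·log(1/(ε·δ)), with probability at least 1−δ over an i.i.d. sample S₁,…,S_m ∼ D the following holds: Pr_{S,S'∼D}[ α·f(S) < f(S') and there exist no indices i,j ∈ [m] with f(S) ≤ f(S_i), α·f(S_i) < f(S_j), and f(S_j) ≤ f(S') ] ≤ ε. -/

import Mathlib

open scoped Classical
open Finset

/-- Probability, under two independent draws from `D`, that the pair `(S, S')` satisfies `P`. -/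
noncomputable def pairPr (n : ℕ) (D : Finset (Fin n) → ℝ)
    (P : Finset (Fin n) → Finset (Fin n) → Prop) : ℝ :=
  ∑ S : Finset (Fin n), ∑ S' : Finset (Fin n), if P S S' then D S * D S' else 0

/-- Probability, under `m` i.i.d. draws from `D`, that the sample satisfies `P`. -/
noncomputable def samplePr (n m : ℕ) (D : Finset (Fin n) → ℝ)
    (P : (Fin m → Finset (Fin n)) → Prop) : ℝ :=
  ∑ s : Fin m → Finset (Fin n), if P s then ∏ i, D (s i) else 0

/-- Comparison bits of the sample `s` under the target set function `f`:
`bits n m f s i j = true` iff `f (s i) ≤ f (s j)`. -/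
noncomputable def bits (n m : ℕ) (f : Finset (Fin n) → ℝ)
    (s : Fin m → Finset (Fin n)) : Fin m → Fin m → Bool :=
  fun i j => decide (f (s i) ≤ f (s j))
namespace LBC

variable {n : ℕ}

/-- Probability of an event under one draw from `D`. -/
noncomputable def Pev (D : Finset (Fin n) → ℝ) (A : Finset (Fin n) → Prop) : ℝ :=
  ∑ S, if A S then D S else 0

lemma Pev_nonneg (D : Finset (Fin n) → ℝ) (hD : ∀ S, 0 ≤ D S) (A : Finset (Fin n) → Prop) :
    0 ≤ Pev D A := by
  refine Finset.sum_nonneg fun S _ => ?_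
  split <;> simp [hD S]

lemma Pev_mono (D : Finset (Fin n) → ℝ) (hD : ∀ S, 0 ≤ D S)
    {A B : Finset (Fin n) → Prop} (h : ∀ S, A S → B S) : Pev D A ≤ Pev D B := by
  refine Finset.sum_le_sum fun S _ => ?_
  by_cases hA : A S
  · simp [hA, h S hA]
  · simp only [hA, if_false]
    split <;> simp [hD S]

lemma Pev_true (D : Finset (Fin n) → ℝ) (hD1 : (∑ S, D S) = 1) :
    Pev D (fun _ => True) = 1 := by
  simpa [Pev] using hD1

lemma Pev_le_one (D : Finset (Fin n) → ℝ) (hD : ∀ S, 0 ≤ D S) (hD1 : (∑ S, D S) = 1)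
    (A : Finset (Fin n) → Prop) : Pev D A ≤ 1 := by
  have := Pev_mono D hD (A := A) (B := fun _ => True) (fun S _ => trivial)
  rwa [Pev_true D hD1] at this

lemma Pev_split (D : Finset (Fin n) → ℝ) (A C : Finset (Fin n) → Prop) :
    Pev D A = Pev D (fun S => A S ∧ C S) + Pev D (fun S => A S ∧ ¬ C S) := by
  rw [Pev, Pev, Pev, ← Finset.sum_add_distrib]
  refine Finset.sum_congr rfl fun S _ => ?_
  by_cases hA : A S <;> by_cases hC : C S <;> simp [hA, hC]

lemma Pev_eq_zero (D : Finset (Fin n) → ℝ) {A : Finset (Fin n) → Prop}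
    (h : ∀ S, ¬ A S) : Pev D A = 0 := by
  refine Finset.sum_eq_zero fun S _ => by simp [h S]

lemma Pev_compl (D : Finset (Fin n) → ℝ) (hD1 : (∑ S, D S) = 1) (A : Finset (Fin n) → Prop) :
    Pev D (fun S => ¬ A S) = 1 - Pev D A := by
  have := Pev_split D (fun _ => True) A
  simp only [true_and] at this
  rw [Pev_true D hD1] at this
  linarith

lemma pairPr_eq_sum (D : Finset (Fin n) → ℝ) (P : Finset (Fin n) → Finset (Fin n) → Prop) :
    pairPr n D P = ∑ S, D S * Pev D (fun S' => P S S') := by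
  unfold pairPr Pev
  refine Finset.sum_congr rfl fun S _ => ?_
  rw [Finset.mul_sum]
  refine Finset.sum_congr rfl fun S' _ => ?_
  split <;> simp

lemma pairPr_mono (D : Finset (Fin n) → ℝ) (hD : ∀ S, 0 ≤ D S)
    {P Q : Finset (Fin n) → Finset (Fin n) → Prop} (h : ∀ S S', P S S' → Q S S') :
    pairPr n D P ≤ pairPr n D Q := by
  refine Finset.sum_le_sum fun S _ => Finset.sum_le_sum fun S' _ => ?_
  by_cases hP : P S S'
  · simp [hP, h S S' hP]
  · simp only [hP, if_false]
    split
    · exact mul_nonneg (hD S) (hD S')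
    · exact le_rfl

lemma pairPr_le_add (D : Finset (Fin n) → ℝ) (hD : ∀ S, 0 ≤ D S)
    {P Q R : Finset (Fin n) → Finset (Fin n) → Prop} (h : ∀ S S', P S S' → Q S S' ∨ R S S') :
    pairPr n D P ≤ pairPr n D Q + pairPr n D R := by
  unfold pairPr
  rw [← Finset.sum_add_distrib]
  refine Finset.sum_le_sum fun S _ => ?_
  rw [← Finset.sum_add_distrib]
  refine Finset.sum_le_sum fun S' _ => ?_
  have hDD : 0 ≤ D S * D S' := mul_nonneg (hD S) (hD S')
  by_cases hP : P S S'
  · rcases h S S' hP with hq | hr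
    · simp only [hP, hq, if_true]
      split <;> linarith
    · simp only [hP, hr, if_true]
      split <;> linarith
  · simp only [hP, if_false]
    split <;> split <;> linarith

lemma pairPr_swap (D : Finset (Fin n) → ℝ) (P : Finset (Fin n) → Finset (Fin n) → Prop) :
    pairPr n D (fun S S' => P S' S) = pairPr n D P := by
  unfold pairPr
  rw [Finset.sum_comm]
  refine Finset.sum_congr rfl fun S _ => Finset.sum_congr rfl fun S' _ => ?_
  split <;> simp [mul_comm]



lemma samplePr_nonneg (m : ℕ) (D : Finset (Fin n) → ℝ) (hD : ∀ S, 0 ≤ D S)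
    (P : (Fin m → Finset (Fin n)) → Prop) : 0 ≤ samplePr n m D P := by
  refine Finset.sum_nonneg fun s _ => ?_
  have : 0 ≤ ∏ i, D (s i) := Finset.prod_nonneg fun i _ => hD (s i)
  split <;> simp [this]

lemma samplePr_mono (m : ℕ) (D : Finset (Fin n) → ℝ) (hD : ∀ S, 0 ≤ D S)
    {P Q : (Fin m → Finset (Fin n)) → Prop} (h : ∀ s, P s → Q s) :
    samplePr n m D P ≤ samplePr n m D Q := by
  refine Finset.sum_le_sum fun s _ => ?_
  have hp : 0 ≤ ∏ i, D (s i) := Finset.prod_nonneg fun i _ => hD (s i)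
  by_cases hP : P s
  · simp [hP, h s hP]
  · simp only [hP, if_false]
    split
    · exact hp
    · exact le_rfl

lemma samplePr_forall_eq (m : ℕ) (D : Finset (Fin n) → ℝ) (A : Finset (Fin n) → Prop) :
    samplePr n m D (fun s => ∀ i, A (s i)) = (LBC.Pev D A) ^ m := by
  have h1 : (∏ _i : Fin m, LBC.Pev D A) = (LBC.Pev D A) ^ m := by
    rw [Finset.prod_const, Finset.card_univ, Fintype.card_fin]
  rw [← h1]
  unfold LBC.Pev
  rw [Finset.prod_univ_sum]
  rw [Fintype.piFinset_univ]
  unfold samplePr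
  refine Finset.sum_congr rfl fun s _ => ?_
  by_cases hA : ∀ i, A (s i)
  · simp [hA]
  · push_neg at hA
    obtain ⟨i0, hi0⟩ := hA
    rw [if_neg (fun h : ∀ i, A (s i) => hi0 (h i0)), eq_comm]
    exact Finset.prod_eq_zero (Finset.mem_univ i0) (by simp [hi0])

lemma samplePr_true (m : ℕ) (D : Finset (Fin n) → ℝ) (hD1 : (∑ S, D S) = 1) :
    samplePr n m D (fun _ => True) = 1 := by
  have h := samplePr_forall_eq (n := n) m D (fun _ => True)
  simp only [implies_true, if_true] at h
  rw [LBC.Pev_true D hD1] at h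
  simpa [samplePr] using h

lemma samplePr_compl (m : ℕ) (D : Finset (Fin n) → ℝ) (hD1 : (∑ S, D S) = 1)
    (P : (Fin m → Finset (Fin n)) → Prop) :
    samplePr n m D P = 1 - samplePr n m D (fun s => ¬ P s) := by
  have h : samplePr n m D P + samplePr n m D (fun s => ¬ P s) = 1 := by
    rw [← samplePr_true m D hD1]
    unfold samplePr
    rw [← Finset.sum_add_distrib]
    refine Finset.sum_congr rfl fun s _ => ?_
    by_cases hP : P s <;> simp [hP]
  linarith

lemma samplePr_union_le (m : ℕ) (D : Finset (Fin n) → ℝ) (hD : ∀ S, 0 ≤ D S)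
    {ι : Type*} (t : Finset ι) (B : ι → (Fin m → Finset (Fin n)) → Prop)
    {A : (Fin m → Finset (Fin n)) → Prop} (h : ∀ s, A s → ∃ j ∈ t, B j s) :
    samplePr n m D A ≤ ∑ j ∈ t, samplePr n m D (B j) := by
  unfold samplePr
  have key : ∀ s : Fin m → Finset (Fin n),
      (if A s then ∏ i, D (s i) else 0) ≤ ∑ j ∈ t, (if B j s then ∏ i, D (s i) else 0) := by
    intro s
    have hp : 0 ≤ ∏ i, D (s i) := Finset.prod_nonneg fun i _ => hD (s i)
    by_cases hA : A s
    · obtain ⟨j0, hj0, hB⟩ := h s hA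
      calc (if A s then ∏ i, D (s i) else 0) = (if B j0 s then ∏ i, D (s i) else 0) := by
                simp [hA, hB]
        _ ≤ ∑ j ∈ t, (if B j s then ∏ i, D (s i) else 0) := by
                refine Finset.single_le_sum (f := fun j => if B j s then ∏ i, D (s i) else 0)
                  (fun j _ => ?_) hj0
                show 0 ≤ (if B j s then ∏ i, D (s i) else 0)
                split
                · exact hp
                · exact le_rfl
    · simp only [hA, if_false]
      refine Finset.sum_nonneg fun j _ => ?_
      split
      · exact hp
      · exact le_rfl
  calc (∑ s : Fin m → Finset (Fin n), if A s then ∏ i, D (s i) else 0)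
      ≤ ∑ s : Fin m → Finset (Fin n), ∑ j ∈ t, (if B j s then ∏ i, D (s i) else 0) :=
        Finset.sum_le_sum fun s _ => key s
    _ = ∑ j ∈ t, ∑ s : Fin m → Finset (Fin n), (if B j s then ∏ i, D (s i) else 0) :=
        Finset.sum_comm

lemma count_bound (a b eps : ℝ) (R : ℕ) (heps : 0 < eps) (hb : 0 ≤ b) (hba : b ≤ a)
    (ha : a ≤ 1) (hR : 1 ≤ (R : ℝ) * eps) :
    a - b ≤ eps + ∑ r ∈ Finset.Icc 1 R, (if b < (r : ℝ) * eps ∧ (r : ℝ) * eps ≤ a then eps else 0) := by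
  have ha0 : 0 ≤ a := le_trans hb hba
  set k := ⌊b / eps⌋₊ with hk
  set l := ⌊a / eps⌋₊ with hl
  have hbk : b < (k + 1 : ℝ) * eps := by
    have := Nat.lt_floor_add_one (b / eps)
    calc b = (b / eps) * eps := by field_simp
      _ < (k + 1 : ℝ) * eps := by
          apply mul_lt_mul_of_pos_right _ heps
          exact_mod_cast this
  have hkb : (k : ℝ) * eps ≤ b := by
    have := Nat.floor_le (show (0:ℝ) ≤ b / eps from div_nonneg hb heps.le)
    calc (k : ℝ) * eps ≤ (b / eps) * eps := mul_le_mul_of_nonneg_right this heps.le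
      _ = b := by field_simp
  have hal : a < (l + 1 : ℝ) * eps := by
    have := Nat.lt_floor_add_one (a / eps)
    calc a = (a / eps) * eps := by field_simp
      _ < (l + 1 : ℝ) * eps := by
          apply mul_lt_mul_of_pos_right _ heps
          exact_mod_cast this
  have hla : (l : ℝ) * eps ≤ a := by
    have := Nat.floor_le (show (0:ℝ) ≤ a / eps from div_nonneg ha0 heps.le)
    calc (l : ℝ) * eps ≤ (a / eps) * eps := mul_le_mul_of_nonneg_right this heps.le
      _ = a := by field_simp
  have hsum_nonneg : (0:ℝ) ≤ ∑ r ∈ Finset.Icc 1 R, (if b < (r : ℝ) * eps ∧ (r : ℝ) * eps ≤ a then eps else 0) := by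
    refine Finset.sum_nonneg fun r _ => ?_
    split
    · exact heps.le
    · exact le_rfl
  by_cases hlk : l ≤ k
  · have : a - b < eps := by
      have h1 : (l : ℝ) ≤ (k : ℝ) := by exact_mod_cast hlk
      nlinarith
    linarith
  · push_neg at hlk
    have hsub : Finset.Icc (k+1) l ⊆ Finset.Icc 1 R := by
      intro r hr
      rw [Finset.mem_Icc] at hr ⊢
      constructor
      · omega
      · -- r * eps ≤ l * eps ≤ a ≤ 1 ≤ R * eps
        have h1 : (r : ℝ) * eps ≤ (l : ℝ) * eps := by
          apply mul_le_mul_of_nonneg_right _ heps.le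
          exact_mod_cast hr.2
        have h2 : (r : ℝ) * eps ≤ (R : ℝ) * eps := by linarith
        have := le_of_mul_le_mul_right (by linarith [h2] : (r:ℝ) * eps ≤ (R:ℝ) * eps) heps
        -- (r:ℝ) ≤ (R:ℝ)
        exact_mod_cast this
    have hcond : ∀ r ∈ Finset.Icc (k+1) l, (if b < (r : ℝ) * eps ∧ (r : ℝ) * eps ≤ a then eps else 0) = eps := by
      intro r hr
      rw [Finset.mem_Icc] at hr
      rw [if_pos]
      constructor
      · have : ((k:ℝ) + 1) * eps ≤ (r : ℝ) * eps := by
          apply mul_le_mul_of_nonneg_right _ heps.le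
          exact_mod_cast hr.1
        linarith
      · have : (r : ℝ) * eps ≤ (l : ℝ) * eps := by
          apply mul_le_mul_of_nonneg_right _ heps.le
          exact_mod_cast hr.2
        linarith
    have hge : ∑ r ∈ Finset.Icc 1 R, (if b < (r : ℝ) * eps ∧ (r : ℝ) * eps ≤ a then eps else 0)
        ≥ ∑ r ∈ Finset.Icc (k+1) l, (if b < (r : ℝ) * eps ∧ (r : ℝ) * eps ≤ a then eps else 0) := by
      refine Finset.sum_le_sum_of_subset_of_nonneg hsub fun r _ _ => ?_
      split
      · exact heps.le
      · exact le_rfl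
    have hcard : ∑ r ∈ Finset.Icc (k+1) l, (if b < (r : ℝ) * eps ∧ (r : ℝ) * eps ≤ a then eps else 0)
        = ((l - k : ℕ) : ℝ) * eps := by
      rw [Finset.sum_congr rfl hcond, Finset.sum_const, Nat.card_Icc]
      simp only [nsmul_eq_mul]
      congr 1
      norm_cast
      omega
    have hcast : ((l - k : ℕ) : ℝ) = (l : ℝ) - (k : ℝ) := by
      have h' : k ≤ l := hlk.le
      push_cast [h']
      ring
    nlinarith [hge, hcard]

lemma net_bound (f D : Finset (Fin n) → ℝ) (hf : ∀ S, 0 ≤ f S)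
    (hD : ∀ S, 0 ≤ D S) (hD1 : (∑ S, D S) = 1) (α : ℝ) (hα : 1 ≤ α)
    (m : ℕ) (s : Fin m → Finset (Fin n)) (c eps0 : ℝ) (hc : 0 ≤ c) (heps0 : 0 < eps0)
    (R : ℕ) (hR : 1 ≤ (R : ℝ) * eps0)
    (hnet : ∀ a b : ℝ, (∀ i, ¬(a < f (s i) ∧ f (s i) ≤ b)) →
      LBC.Pev D (fun S => a < f S ∧ f S ≤ b) ≤ c) :
    pairPr n D (fun S S' => α * f S < f S' ∧
      ¬ ∃ i j : Fin m, f S ≤ f (s i) ∧ α * f (s i) < f (s j) ∧ f (s j) ≤ f S')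
      ≤ eps0 + (R : ℝ) * eps0 * c + c := by
  have hα0 : (0:ℝ) ≤ α := le_trans zero_le_one hα
  set g : ℝ → ℝ := fun t => LBC.Pev D (fun S' => α * t < f S') with hg
  have hganti : ∀ t t', t ≤ t' → g t' ≤ g t := by
    intro t t' htt
    refine Pev_mono D hD fun S' h => ?_
    have : α * t ≤ α * t' := mul_le_mul_of_nonneg_left htt hα0
    linarith
  have hg0 : ∀ t, 0 ≤ g t := fun t => Pev_nonneg D hD _
  have hg1 : ∀ t, g t ≤ 1 := fun t => Pev_le_one D hD hD1 _
  set T : Finset (Fin n) → Finset (Fin n) → Prop :=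
    fun S S' => α * f S < f S' ∧ ∀ i, ¬ (f S ≤ f (s i) ∧ α * f (s i) < f S') with hT
  set M : Finset (Fin n) → Finset (Fin n) → Prop :=
    fun S S' => ∃ i, f S ≤ f (s i) ∧ (∀ k, f S ≤ f (s k) → f (s i) ≤ f (s k)) ∧
      α * f (s i) < f S' ∧ ∀ j, ¬ (α * f (s i) < f (s j) ∧ f (s j) ≤ f S') with hM
  have hdec : pairPr n D (fun S S' => α * f S < f S' ∧
      ¬ ∃ i j : Fin m, f S ≤ f (s i) ∧ α * f (s i) < f (s j) ∧ f (s j) ≤ f S')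
      ≤ pairPr n D T + pairPr n D M := by
    refine pairPr_le_add D hD fun S S' hP => ?_
    obtain ⟨hxy, hno⟩ := hP
    by_cases hTc : ∀ i, ¬ (f S ≤ f (s i) ∧ α * f (s i) < f S')
    · exact Or.inl ⟨hxy, hTc⟩
    · push_neg at hTc
      obtain ⟨i1, hi1, hlt1⟩ := hTc
      have hne : (Finset.univ.filter fun i => f S ≤ f (s i)).Nonempty :=
        ⟨i1, by simp [hi1]⟩
      obtain ⟨i0, hi0mem, hmin⟩ := Finset.exists_min_image _ (fun i => f (s i)) hne
      have hi0 : f S ≤ f (s i0) := (Finset.mem_filter.mp hi0mem).2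
      refine Or.inr ⟨i0, hi0, ?_, ?_, ?_⟩
      · intro k hk
        exact hmin k (by simp [hk])
      · have h1 : f (s i0) ≤ f (s i1) := hmin i1 (by simp [hi1])
        have h2 : α * f (s i0) ≤ α * f (s i1) := mul_le_mul_of_nonneg_left h1 hα0
        linarith
      · intro j hj
        exact hno ⟨i0, j, hi0, hj.1, hj.2⟩
  -- bound on M
  have hMb : pairPr n D M ≤ c := by
    rw [pairPr_eq_sum]
    have hper : ∀ S, LBC.Pev D (fun S' => M S S') ≤ c := by
      intro S
      by_cases hex : ∃ i, f S ≤ f (s i)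
      · have hne : (Finset.univ.filter fun i => f S ≤ f (s i)).Nonempty := by
          obtain ⟨i1, hi1⟩ := hex
          exact ⟨i1, by simp [hi1]⟩
        obtain ⟨i0, hi0mem, hmin⟩ := Finset.exists_min_image _ (fun i => f (s i)) hne
        have hi0 : f S ≤ f (s i0) := (Finset.mem_filter.mp hi0mem).2
        have hkey : ∀ S', M S S' →
            (α * f (s i0) < f S' ∧ ∀ j, ¬ (α * f (s i0) < f (s j) ∧ f (s j) ≤ f S')) := by
          intro S' hMS
          obtain ⟨i, hi, himin, hilt, hino⟩ := hMS
          have heq : f (s i) = f (s i0) :=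
            le_antisymm (himin i0 hi0) (hmin i (by simp [hi]))
          rw [heq] at hilt hino
          exact ⟨hilt, hino⟩
        set W : Finset ℝ := (Finset.univ.image f).filter
          (fun v => α * f (s i0) < v ∧ ∀ j, ¬ (α * f (s i0) < f (s j) ∧ f (s j) ≤ v)) with hW
        by_cases hWne : W.Nonempty
        · set ybar := W.max' hWne with hybar
          have hybarW := Finset.mem_filter.mp (W.max'_mem hWne)
          have hmono : ∀ S', M S S' → (α * f (s i0) < f S' ∧ f S' ≤ ybar) := by
            intro S' hMS
            have h1 := hkey S' hMS
            have hmem : f S' ∈ W := by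
              rw [hW, Finset.mem_filter]
              exact ⟨Finset.mem_image_of_mem f (Finset.mem_univ S'), h1.1, h1.2⟩
            exact ⟨h1.1, W.le_max' _ hmem⟩
          refine le_trans (Pev_mono D hD hmono) (hnet _ _ ?_)
          intro i hi
          exact hybarW.2.2 i ⟨hi.1, hi.2⟩
        · have : LBC.Pev D (fun S' => M S S') = 0 := by
            refine Pev_eq_zero D fun S' hMS => ?_
            have h1 := hkey S' hMS
            refine hWne ⟨f S', ?_⟩
            rw [hW, Finset.mem_filter]
            exact ⟨Finset.mem_image_of_mem f (Finset.mem_univ S'), h1.1, h1.2⟩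
          rw [this]; exact hc
      · have : LBC.Pev D (fun S' => M S S') = 0 := by
          refine Pev_eq_zero D fun S' hMS => ?_
          obtain ⟨i, hi, _⟩ := hMS
          exact hex ⟨i, hi⟩
        rw [this]; exact hc
    calc (∑ S, D S * LBC.Pev D (fun S' => M S S'))
        ≤ ∑ S, D S * c := Finset.sum_le_sum fun S _ =>
            mul_le_mul_of_nonneg_left (hper S) (hD S)
      _ = (∑ S, D S) * c := by rw [Finset.sum_mul]
      _ = c := by rw [hD1, one_mul]
  -- the level events
  set X : ℕ → Finset (Fin n) → Prop := fun r S =>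
    ((r : ℝ) * eps0 ≤ g (f S)) ∧ ∀ i, f S ≤ f (s i) → g (f (s i)) < (r : ℝ) * eps0 with hX
  -- per-x bound for T
  have hTper : ∀ S, LBC.Pev D (fun S' => T S S') ≤
      eps0 + ∑ r ∈ Finset.Icc 1 R, (if X r S then eps0 else 0) := by
    intro S
    by_cases hex : ∃ i, f S ≤ f (s i)
    · have hne : (Finset.univ.filter fun i => f S ≤ f (s i)).Nonempty := by
        obtain ⟨i1, hi1⟩ := hex
        exact ⟨i1, by simp [hi1]⟩
      obtain ⟨i0, hi0mem, hmin⟩ := Finset.exists_min_image _ (fun i => f (s i)) hne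
      have hi0 : f S ≤ f (s i0) := (Finset.mem_filter.mp hi0mem).2
      have hb : g (f (s i0)) ≤ g (f S) := hganti _ _ hi0
      -- Pev T ≤ g (f S) - g (f (s i0))
      have hPT : LBC.Pev D (fun S' => T S S') ≤ g (f S) - g (f (s i0)) := by
        have hsplit := Pev_split D (fun S' => α * f S < f S') (fun S' => f S' ≤ α * f (s i0))
        have hsecond : LBC.Pev D (fun S' => α * f S < f S' ∧ ¬ (f S' ≤ α * f (s i0)))
            = g (f (s i0)) := by
          have e2 : g (f (s i0)) = LBC.Pev D (fun S' => α * f (s i0) < f S') := rfl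
          rw [e2]
          congr 1
          funext S'
          have hax : α * f S ≤ α * f (s i0) := mul_le_mul_of_nonneg_left hi0 hα0
          simp only [not_le]
          rw [eq_iff_iff]
          constructor
          · exact fun h => h.2
          · exact fun h => ⟨lt_of_le_of_lt hax h, h⟩
        have hgx : g (f S) = LBC.Pev D (fun S' => α * f S < f S' ∧ f S' ≤ α * f (s i0))
            + g (f (s i0)) := by
          have e1 : g (f S) = LBC.Pev D (fun S' => α * f S < f S') := rfl
          rw [e1, ← hsecond]
          exact hsplit
        have hmono : LBC.Pev D (fun S' => T S S') ≤
            LBC.Pev D (fun S' => α * f S < f S' ∧ f S' ≤ α * f (s i0)) := by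
          refine Pev_mono D hD fun S' hTS => ?_
          obtain ⟨h1, h2⟩ := hTS
          refine ⟨h1, ?_⟩
          by_contra hgt
          push_neg at hgt
          exact h2 i0 ⟨hi0, hgt⟩
        linarith
      have hcount := count_bound (g (f S)) (g (f (s i0))) eps0 R heps0 (hg0 _) hb (hg1 _) hR
      have hite : ∀ r ∈ Finset.Icc 1 R,
          (if g (f (s i0)) < (r : ℝ) * eps0 ∧ (r : ℝ) * eps0 ≤ g (f S) then eps0 else 0)
          ≤ (if X r S then eps0 else 0) := by
        intro r _
        split_ifs with h1 h2
        · exact le_rfl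
        · exfalso
          refine h2 ⟨h1.2, fun i hi => ?_⟩
          have : f (s i0) ≤ f (s i) := hmin i (by simp [hi])
          exact lt_of_le_of_lt (hganti _ _ this) h1.1
        · exact heps0.le
        · exact le_rfl
      calc LBC.Pev D (fun S' => T S S') ≤ g (f S) - g (f (s i0)) := hPT
        _ ≤ eps0 + ∑ r ∈ Finset.Icc 1 R,
              (if g (f (s i0)) < (r : ℝ) * eps0 ∧ (r : ℝ) * eps0 ≤ g (f S) then eps0 else 0) := hcount
        _ ≤ eps0 + ∑ r ∈ Finset.Icc 1 R, (if X r S then eps0 else 0) := by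
              exact add_le_add (le_refl eps0) (Finset.sum_le_sum hite)
    · -- no sample above f S
      have hPT : LBC.Pev D (fun S' => T S S') ≤ g (f S) := by
        refine Pev_mono D hD fun S' hTS => hTS.1
      have hcount := count_bound (g (f S)) 0 eps0 R heps0 le_rfl (hg0 _) (hg1 _) hR
      rw [sub_zero] at hcount
      have hite : ∀ r ∈ Finset.Icc 1 R,
          (if (0:ℝ) < (r : ℝ) * eps0 ∧ (r : ℝ) * eps0 ≤ g (f S) then eps0 else 0)
          ≤ (if X r S then eps0 else 0) := by
        intro r _
        split_ifs with h1 h2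
        · exact le_rfl
        · exfalso
          refine h2 ⟨h1.2, fun i hi => absurd ⟨i, hi⟩ hex⟩
        · exact heps0.le
        · exact le_rfl
      calc LBC.Pev D (fun S' => T S S') ≤ g (f S) := hPT
        _ ≤ eps0 + ∑ r ∈ Finset.Icc 1 R,
              (if (0:ℝ) < (r : ℝ) * eps0 ∧ (r : ℝ) * eps0 ≤ g (f S) then eps0 else 0) := hcount
        _ ≤ eps0 + ∑ r ∈ Finset.Icc 1 R, (if X r S then eps0 else 0) := by
              exact add_le_add (le_refl eps0) (Finset.sum_le_sum hite)
  -- bound Pev (X r) ≤ c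
  have hXb : ∀ r : ℕ, 1 ≤ r → LBC.Pev D (X r) ≤ c := by
    intro r _
    set W : Finset ℝ := (Finset.univ.image f).filter
      (fun v => (r : ℝ) * eps0 ≤ g v ∧ ∀ i, v ≤ f (s i) → g (f (s i)) < (r : ℝ) * eps0) with hW
    by_cases hWne : W.Nonempty
    · set xbar := W.max' hWne with hxbar
      have hxbarW := Finset.mem_filter.mp (W.max'_mem hWne)
      set A : Finset ℝ := (Finset.univ.image fun i => f (s i)).filter
        (fun u => (r : ℝ) * eps0 ≤ g u) with hA
      have hmain : LBC.Pev D (X r) ≤ c := by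
        by_cases hAne : A.Nonempty
        · set a := A.max' hAne with ha
          have haA := Finset.mem_filter.mp (A.max'_mem hAne)
          obtain ⟨istar, _, histar⟩ := Finset.mem_image.mp haA.1
          have hga : (r : ℝ) * eps0 ≤ g a := haA.2
          refine le_trans (Pev_mono D hD (B := fun S => a < f S ∧ f S ≤ xbar) ?_) (hnet a xbar ?_)
          · intro S hXS
            have hmemW : f S ∈ W := by
              rw [hW, Finset.mem_filter]
              exact ⟨Finset.mem_image_of_mem f (Finset.mem_univ S), hXS.1, hXS.2⟩
            refine ⟨?_, W.le_max' _ hmemW⟩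
            by_contra hle
            push_neg at hle
            have := hXS.2 istar (by rw [histar]; exact hle)
            rw [histar] at this
            exact absurd hga (not_le.mpr this)
          · intro i hi
            have hgi : (r : ℝ) * eps0 ≤ g (f (s i)) :=
              le_trans hxbarW.2.1 (hganti _ _ hi.2)
            have hiA : f (s i) ∈ A := by
              rw [hA, Finset.mem_filter]
              exact ⟨Finset.mem_image_of_mem _ (Finset.mem_univ i), hgi⟩
            have := A.le_max' _ hiA
            rw [← ha] at this
            exact absurd hi.1 (not_lt.mpr this)
        · refine le_trans (Pev_mono D hD (B := fun S => (-1:ℝ) < f S ∧ f S ≤ xbar) ?_)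
            (hnet (-1) xbar ?_)
          · intro S hXS
            have hmemW : f S ∈ W := by
              rw [hW, Finset.mem_filter]
              exact ⟨Finset.mem_image_of_mem f (Finset.mem_univ S), hXS.1, hXS.2⟩
            exact ⟨lt_of_lt_of_le (by norm_num) (hf S), W.le_max' _ hmemW⟩
          · intro i hi
            have hgi : (r : ℝ) * eps0 ≤ g (f (s i)) :=
              le_trans hxbarW.2.1 (hganti _ _ hi.2)
            refine hAne ⟨f (s i), ?_⟩
            rw [hA, Finset.mem_filter]
            exact ⟨Finset.mem_image_of_mem _ (Finset.mem_univ i), hgi⟩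
      exact hmain
    · have : LBC.Pev D (X r) = 0 := by
        refine Pev_eq_zero D fun S hXS => ?_
        refine hWne ⟨f S, ?_⟩
        rw [hW, Finset.mem_filter]
        exact ⟨Finset.mem_image_of_mem f (Finset.mem_univ S), hXS.1, hXS.2⟩
      rw [this]; exact hc
  -- total bound on T
  have hTb : pairPr n D T ≤ eps0 + (R : ℝ) * eps0 * c := by
    rw [pairPr_eq_sum]
    calc (∑ S, D S * LBC.Pev D (fun S' => T S S'))
        ≤ ∑ S, D S * (eps0 + ∑ r ∈ Finset.Icc 1 R, (if X r S then eps0 else 0)) :=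
          Finset.sum_le_sum fun S _ => mul_le_mul_of_nonneg_left (hTper S) (hD S)
      _ = (∑ S, D S) * eps0 + ∑ r ∈ Finset.Icc 1 R, eps0 * LBC.Pev D (X r) := by
          have h1 : ∀ S, D S * (eps0 + ∑ r ∈ Finset.Icc 1 R, (if X r S then eps0 else 0))
              = D S * eps0 + ∑ r ∈ Finset.Icc 1 R, eps0 * (if X r S then D S else 0) := by
            intro S
            rw [mul_add, Finset.mul_sum]
            congr 1
            refine Finset.sum_congr rfl fun r _ => ?_
            by_cases hx : X r S <;> simp [hx, mul_comm]
          rw [Finset.sum_congr rfl fun S _ => h1 S, Finset.sum_add_distrib, ← Finset.sum_mul,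
            Finset.sum_comm]
          congr 1
          refine Finset.sum_congr rfl fun r _ => ?_
          rw [← Finset.mul_sum]
          unfold LBC.Pev
          congr 1
          exact Finset.sum_congr rfl fun S _ => by split_ifs <;> rfl
      _ ≤ eps0 + (R : ℝ) * eps0 * c := by
          rw [hD1, one_mul]
          have : ∑ r ∈ Finset.Icc 1 R, eps0 * LBC.Pev D (X r)
              ≤ ∑ r ∈ Finset.Icc 1 R, eps0 * c := by
            refine Finset.sum_le_sum fun r hr => ?_
            refine mul_le_mul_of_nonneg_left (hXb r (Finset.mem_Icc.mp hr).1) heps0.le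
          have hcard : ∑ r ∈ Finset.Icc 1 R, eps0 * c = (R:ℝ) * (eps0 * c) := by
            rw [Finset.sum_const, Nat.card_Icc]
            simp [nsmul_eq_mul]
          rw [hcard] at this
          have : ∑ r ∈ Finset.Icc 1 R, eps0 * LBC.Pev D (X r) ≤ (R:ℝ) * eps0 * c := by
            rw [mul_assoc]; exact this
          linarith
  linarith [hdec, hMb, hTb]

noncomputable def Ffun (f D : Finset (Fin n) → ℝ) (t : ℝ) : ℝ :=
  LBC.Pev D (fun S => f S ≤ t)

lemma Ffun_def (f D : Finset (Fin n) → ℝ) (t : ℝ) :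
    Ffun f D t = LBC.Pev D (fun S => f S ≤ t) := rfl

noncomputable def qpt (f D : Finset (Fin n) → ℝ) (η : ℝ) (j : ℕ) : ℝ :=
  if h : ((Finset.univ.image f).filter fun v => (j : ℝ) * η ≤ Ffun f D v).Nonempty
  then ((Finset.univ.image f).filter fun v => (j : ℝ) * η ≤ Ffun f D v).min' h else 0

def Good (f D : Finset (Fin n) → ℝ) (η : ℝ) (J m : ℕ) (s : Fin m → Finset (Fin n)) : Prop :=
  ∀ j ∈ Finset.Icc 2 J, ∃ i, qpt f D η (j-1) ≤ f (s i) ∧ f (s i) ≤ qpt f D η j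

set_option maxHeartbeats 1000000 in
lemma good_implies_net (f D : Finset (Fin n) → ℝ)
    (hD : ∀ S, 0 ≤ D S) (hD1 : (∑ S, D S) = 1) (η : ℝ) (hη : 0 < η)
    (J : ℕ) (hJ : ∀ j : ℕ, (j : ℝ) * η < 1 → j ≤ J)
    (m : ℕ) (s : Fin m → Finset (Fin n)) (hgood : Good f D η J m s) :
    ∀ a b : ℝ, (∀ i, ¬(a < f (s i) ∧ f (s i) ≤ b)) →
      LBC.Pev D (fun S => a < f S ∧ f S ≤ b) ≤ 4 * η := by
  intro a b hfree
  by_contra hmass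
  push_neg at hmass
  have hpos : 0 < LBC.Pev D (fun S => a < f S ∧ f S ≤ b) :=
    lt_trans (by positivity) hmass
  have hex : ∃ S0, a < f S0 ∧ f S0 ≤ b := by
    by_contra hno
    push_neg at hno
    have : LBC.Pev D (fun S => a < f S ∧ f S ≤ b) = 0 :=
      Pev_eq_zero D fun S hS => absurd hS.2 (not_le.mpr (hno S hS.1))
    linarith
  obtain ⟨S0, hS0⟩ := hex
  have hab : a ≤ b := le_trans hS0.1.le hS0.2
  have hsplit : Ffun f D b = Ffun f D a + LBC.Pev D (fun S => a < f S ∧ f S ≤ b) := by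
    have h := Pev_split D (fun S => f S ≤ b) (fun S => f S ≤ a)
    have e1 : LBC.Pev D (fun S => f S ≤ b ∧ f S ≤ a) = Ffun f D a := by
      rw [Ffun_def]
      congr 1
      funext S
      rw [eq_iff_iff]
      exact ⟨fun hh => hh.2, fun hh => ⟨le_trans hh hab, hh⟩⟩
    have e2 : LBC.Pev D (fun S => f S ≤ b ∧ ¬ f S ≤ a) =
        LBC.Pev D (fun S => a < f S ∧ f S ≤ b) := by
      congr 1
      funext S
      rw [eq_iff_iff]
      simp only [not_le]
      exact ⟨fun hh => ⟨hh.2, hh.1⟩, fun hh => ⟨hh.2, hh.1⟩⟩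
    rw [e1, e2] at h
    rw [Ffun_def]
    exact h
  have hFb1 : Ffun f D b ≤ 1 := Pev_le_one D hD hD1 _
  have hFa0 : 0 ≤ Ffun f D a := Pev_nonneg D hD _
  set Fa := Ffun f D a with hFa
  set j := ⌊Fa / η⌋₊ + 2 with hj
  have hdiv : (Fa / η) * η = Fa := div_mul_cancel₀ _ hη.ne'
  have hfl1 : (⌊Fa / η⌋₊ : ℝ) ≤ Fa / η := Nat.floor_le (div_nonneg hFa0 hη.le)
  have hfl2 : Fa / η < (⌊Fa / η⌋₊ : ℝ) + 1 := Nat.lt_floor_add_one _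
  have hj_ub : (j : ℝ) * η ≤ Fa + 2 * η := by
    rw [hj]
    push_cast
    nlinarith
  have hj_lb : Fa + η < (j : ℝ) * η := by
    rw [hj]
    push_cast
    nlinarith
  have hmass4 : Fa + 4 * η < Ffun f D b := by
    rw [hsplit]
    linarith
  have hjJ : j ≤ J := hJ j (by nlinarith)
  have hj2 : 2 ≤ j := by omega
  have hVb : ((Finset.univ.image f).filter fun v => v ≤ b).Nonempty :=
    ⟨f S0, Finset.mem_filter.mpr ⟨Finset.mem_image_of_mem f (Finset.mem_univ S0), hS0.2⟩⟩
  set vb := ((Finset.univ.image f).filter fun v => v ≤ b).max' hVb with hvb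
  have hvbmem := Finset.mem_filter.mp (Finset.max'_mem _ hVb)
  have hFvb : Ffun f D b ≤ Ffun f D vb := by
    rw [Ffun_def, Ffun_def]
    refine Pev_mono D hD fun S hS => ?_
    rw [hvb]
    exact Finset.le_max' ((Finset.univ.image f).filter fun v => v ≤ b) (f S)
      (Finset.mem_filter.mpr ⟨Finset.mem_image_of_mem f (Finset.mem_univ S), hS⟩)
  have hvbq : (j : ℝ) * η ≤ Ffun f D vb := by linarith
  have hvbmem2 : vb ∈ (Finset.univ.image f).filter fun v => (j : ℝ) * η ≤ Ffun f D v :=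
    Finset.mem_filter.mpr ⟨hvbmem.1, hvbq⟩
  have hQjne : ((Finset.univ.image f).filter fun v => (j : ℝ) * η ≤ Ffun f D v).Nonempty :=
    ⟨vb, hvbmem2⟩
  have hqj_le : qpt f D η j ≤ b := by
    rw [qpt, dif_pos hQjne]
    exact le_trans (Finset.min'_le _ vb hvbmem2) hvbmem.2
  have hcast : ((j - 1 : ℕ) : ℝ) = (j : ℝ) - 1 := by
    have h' : 1 ≤ j := by omega
    push_cast [h']
    ring
  have hvbq1 : ((j - 1 : ℕ) : ℝ) * η ≤ Ffun f D vb := by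
    rw [hcast]
    nlinarith
  have hvbmem1 : vb ∈ (Finset.univ.image f).filter fun v => ((j - 1 : ℕ) : ℝ) * η ≤ Ffun f D v :=
    Finset.mem_filter.mpr ⟨hvbmem.1, hvbq1⟩
  have hQj1ne : ((Finset.univ.image f).filter
      fun v => ((j - 1 : ℕ) : ℝ) * η ≤ Ffun f D v).Nonempty := ⟨vb, hvbmem1⟩
  have hq1_gt : a < qpt f D η (j - 1) := by
    rw [qpt, dif_pos hQj1ne]
    by_contra hle
    push_neg at hle
    have hmem := Finset.mem_filter.mp (Finset.min'_mem _ hQj1ne)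
    have hmono : Ffun f D (((Finset.univ.image f).filter
        fun v => ((j - 1 : ℕ) : ℝ) * η ≤ Ffun f D v).min' hQj1ne) ≤ Fa := by
      rw [hFa, Ffun_def, Ffun_def]
      exact Pev_mono D hD fun S hS => le_trans hS hle
    have h3 : ((j - 1 : ℕ) : ℝ) * η = (j : ℝ) * η - η := by rw [hcast]; ring
    linarith [hmem.2, hmono, hj_lb, h3]
  obtain ⟨i, hi1, hi2⟩ := hgood j (Finset.mem_Icc.mpr ⟨hj2, hjJ⟩)
  exact hfree i ⟨lt_of_lt_of_le hq1_gt hi1, le_trans hi2 hqj_le⟩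

set_option maxHeartbeats 1000000 in
lemma good_prob (f D : Finset (Fin n) → ℝ)
    (hD : ∀ S, 0 ≤ D S) (hD1 : (∑ S, D S) = 1) (η : ℝ) (hη : 0 < η) (hη1 : η ≤ 1)
    (J : ℕ) (hJη : (J : ℝ) * η ≤ 1) (m : ℕ) :
    1 - (J : ℝ) * (1 - η) ^ m ≤ samplePr n m D (fun s => Good f D η J m s) := by
  have hVne : (Finset.univ.image f).Nonempty :=
    ⟨f ∅, Finset.mem_image_of_mem f (Finset.mem_univ ∅)⟩
  set vmax := (Finset.univ.image f).max' hVne with hvmax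
  have hFvmax : Ffun f D vmax = 1 := by
    rw [Ffun_def, ← Pev_true D hD1]
    congr 1
    funext S
    rw [eq_iff_iff]
    refine ⟨fun _ => trivial, fun _ => ?_⟩
    rw [hvmax]
    exact Finset.le_max' (Finset.univ.image f) (f S)
      (Finset.mem_image_of_mem f (Finset.mem_univ S))
  have hmassy : ∀ j, 2 ≤ j → j ≤ J →
      η ≤ LBC.Pev D (fun S => qpt f D η (j-1) ≤ f S ∧ f S ≤ qpt f D η j) := by
    intro j hj2 hjJ
    have hjη : (j : ℝ) * η ≤ 1 := by
      have : (j : ℝ) ≤ (J : ℝ) := by exact_mod_cast hjJ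
      nlinarith
    have hcast : ((j - 1 : ℕ) : ℝ) = (j : ℝ) - 1 := by
      have h' : 1 ≤ j := by omega
      push_cast [h']
      ring
    have hj1η : ((j - 1 : ℕ) : ℝ) * η ≤ 1 := by
      rw [hcast]
      nlinarith
    have hne2 : ((Finset.univ.image f).filter fun v => (j : ℝ) * η ≤ Ffun f D v).Nonempty := by
      refine ⟨vmax, Finset.mem_filter.mpr ⟨Finset.max'_mem _ hVne, ?_⟩⟩
      rw [hFvmax]
      exact hjη
    have hne1 : ((Finset.univ.image f).filter
        fun v => ((j - 1 : ℕ) : ℝ) * η ≤ Ffun f D v).Nonempty := by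
      refine ⟨vmax, Finset.mem_filter.mpr ⟨Finset.max'_mem _ hVne, ?_⟩⟩
      rw [hFvmax]
      exact hj1η
    set c2 := qpt f D η j with hc2
    set c1 := qpt f D η (j-1) with hc1
    have hc2eq : c2 = ((Finset.univ.image f).filter
        fun v => (j : ℝ) * η ≤ Ffun f D v).min' hne2 := by
      rw [hc2, qpt, dif_pos hne2]
    have hc1eq : c1 = ((Finset.univ.image f).filter
        fun v => ((j - 1 : ℕ) : ℝ) * η ≤ Ffun f D v).min' hne1 := by
      rw [hc1, qpt, dif_pos hne1]
    have hFc2 : (j : ℝ) * η ≤ Ffun f D c2 := by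
      rw [hc2eq]
      exact (Finset.mem_filter.mp (Finset.min'_mem _ hne2)).2
    have hlt : LBC.Pev D (fun S => f S < c1) ≤ ((j - 1 : ℕ) : ℝ) * η := by
      by_cases hWne : ((Finset.univ.image f).filter fun v => v < c1).Nonempty
      · have hmem' := Finset.mem_filter.mp
          (((Finset.univ.image f).filter fun v => v < c1).max'_mem hWne)
        have hub' : ∀ S : Finset (Fin n), f S < c1 →
            f S ≤ ((Finset.univ.image f).filter fun v => v < c1).max' hWne := by
          intro S hS
          exact Finset.le_max' ((Finset.univ.image f).filter fun v => v < c1) (f S)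
            (Finset.mem_filter.mpr ⟨Finset.mem_image_of_mem f (Finset.mem_univ S), hS⟩)
        have h1 : LBC.Pev D (fun S => f S < c1) ≤
            Ffun f D (((Finset.univ.image f).filter fun v => v < c1).max' hWne) := by
          rw [Ffun_def]
          exact Pev_mono D hD fun S hS => hub' S hS
        have h2 : Ffun f D (((Finset.univ.image f).filter fun v => v < c1).max' hWne)
            < ((j - 1 : ℕ) : ℝ) * η := by
          by_contra hge
          push_neg at hge
          have hmemq : ((Finset.univ.image f).filter fun v => v < c1).max' hWne ∈
              (Finset.univ.image f).filter (fun v => ((j - 1 : ℕ) : ℝ) * η ≤ Ffun f D v) :=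
            Finset.mem_filter.mpr ⟨hmem'.1, hge⟩
          have hle2 := Finset.min'_le _ _ hmemq
          have hlt2 := hmem'.2
          have hmin_eq := hc1eq
          linarith [hle2, hlt2, hmin_eq.le, hmin_eq.ge]
        linarith
      · have : LBC.Pev D (fun S => f S < c1) = 0 := by
          refine Pev_eq_zero D fun S hS => ?_
          exact hWne ⟨f S, Finset.mem_filter.mpr
            ⟨Finset.mem_image_of_mem f (Finset.mem_univ S), hS⟩⟩
        rw [this]
        have : (0:ℝ) ≤ ((j - 1 : ℕ) : ℝ) * η := by positivity
        linarith
    have hsplit := Pev_split D (fun S => f S ≤ c2) (fun S => f S < c1)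
    have e2 : LBC.Pev D (fun S => f S ≤ c2 ∧ ¬ f S < c1) =
        LBC.Pev D (fun S => c1 ≤ f S ∧ f S ≤ c2) := by
      congr 1
      funext S
      rw [eq_iff_iff]
      simp only [not_lt]
      exact ⟨fun hh => ⟨hh.2, hh.1⟩, fun hh => ⟨hh.2, hh.1⟩⟩
    rw [e2] at hsplit
    have hfirst : LBC.Pev D (fun S => f S ≤ c2 ∧ f S < c1) ≤
        LBC.Pev D (fun S => f S < c1) := Pev_mono D hD fun S hS => hS.2
    have hFc2' : LBC.Pev D (fun S => f S ≤ c2) = Ffun f D c2 := rfl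
    rw [hFc2'] at hsplit
    rw [hcast] at hlt
    nlinarith
  have hcompl := samplePr_compl m D hD1 (fun s => Good f D η J m s)
  have hub : samplePr n m D (fun s => ¬ Good f D η J m s) ≤ (J : ℝ) * (1 - η) ^ m := by
    have h1 : samplePr n m D (fun s => ¬ Good f D η J m s)
        ≤ ∑ j ∈ Finset.Icc 2 J, samplePr n m D
          (fun s => ∀ i, ¬(qpt f D η (j-1) ≤ f (s i) ∧ f (s i) ≤ qpt f D η j)) := by
      refine samplePr_union_le m D hD _ _ fun s hs => ?_
      unfold Good at hs
      push_neg at hs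
      obtain ⟨j, hj, hcon⟩ := hs
      exact ⟨j, hj, fun i hi => absurd hi.2 (not_le.mpr (hcon i hi.1))⟩
    have h2 : ∀ j ∈ Finset.Icc 2 J, samplePr n m D
        (fun s => ∀ i, ¬(qpt f D η (j-1) ≤ f (s i) ∧ f (s i) ≤ qpt f D η j))
        ≤ (1 - η) ^ m := by
      intro j hj
      rw [Finset.mem_Icc] at hj
      have heq := samplePr_forall_eq (n := n) m D
        (fun S => ¬(qpt f D η (j-1) ≤ f S ∧ f S ≤ qpt f D η j))
      rw [heq]
      rw [Pev_compl D hD1]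
      have hm := hmassy j hj.1 hj.2
      have hle1 : LBC.Pev D (fun S => qpt f D η (j-1) ≤ f S ∧ f S ≤ qpt f D η j) ≤ 1 :=
        Pev_le_one D hD hD1 _
      refine pow_le_pow_left₀ (by linarith) (by linarith) m
    calc samplePr n m D (fun s => ¬ Good f D η J m s)
        ≤ ∑ j ∈ Finset.Icc 2 J, samplePr n m D
          (fun s => ∀ i, ¬(qpt f D η (j-1) ≤ f (s i) ∧ f (s i) ≤ qpt f D η j)) := h1
      _ ≤ ∑ j ∈ Finset.Icc 2 J, (1 - η) ^ m := Finset.sum_le_sum h2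
      _ = ((Finset.Icc 2 J).card : ℝ) * (1 - η) ^ m := by
          rw [Finset.sum_const, nsmul_eq_mul]
      _ ≤ (J : ℝ) * (1 - η) ^ m := by
          have hcard : ((Finset.Icc 2 J).card : ℝ) ≤ (J : ℝ) := by
            have hcn : (Finset.Icc 2 J).card ≤ J := by
              rw [Nat.card_Icc]; omega
            exact_mod_cast hcn
          have hpow : (0:ℝ) ≤ (1 - η) ^ m := pow_nonneg (by linarith) m
          exact mul_le_mul_of_nonneg_right hcard hpow
  linarith
end LBC

set_option maxHeartbeats 1000000 in
/-- with `m ≥ C·(1/ε)·log(1/(εδ))` i.i.d. landmark samples, with probability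
at least `1 − δ`, the probability that a random pair `(S, S')` has `α·f(S) < f(S')` and yet
no pair of landmarks `S_i, S_j` satisfies `f(S) ≤ f(S_i)`, `α·f(S_i) < f(S_j)`, `f(S_j) ≤ f(S')`
is at most `ε`. -/
theorem landmark_bucket_claim :
    ∃ C : ℝ, 0 < C ∧
      ∀ (n : ℕ) (f : Finset (Fin n) → ℝ), (∀ S, 0 ≤ f S) →
      ∀ α : ℝ, 1 ≤ α →
      ∀ D : Finset (Fin n) → ℝ, (∀ S, 0 ≤ D S) → (∑ S, D S) = 1 →
      ∀ ε δ : ℝ, 0 < ε → ε < 1 → 0 < δ → δ < 1 →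
      ∀ m : ℕ, C * (1 / ε) * Real.log (1 / (ε * δ)) ≤ (m : ℝ) →
        1 - δ ≤ samplePr n m D (fun s =>
          pairPr n D (fun S S' =>
            α * f S < f S' ∧
            ¬ ∃ i j : Fin m, f S ≤ f (s i) ∧ α * f (s i) < f (s j) ∧ f (s j) ≤ f S') ≤ ε) := by
  refine ⟨1000, by norm_num, ?_⟩
  intro n f hf α hα D hD hD1 ε δ hε hε1 hδ hδ1 m hm
  by_cases hhalf : (1/2 : ℝ) ≤ ε
  · -- trivial case: the pair probability is always at most 1/2 ≤ ε
    have htriv : ∀ s : Fin m → Finset (Fin n), pairPr n D (fun S S' =>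
        α * f S < f S' ∧
        ¬ ∃ i j : Fin m, f S ≤ f (s i) ∧ α * f (s i) < f (s j) ∧ f (s j) ≤ f S') ≤ ε := by
      intro s
      have h1 : pairPr n D (fun S S' =>
          α * f S < f S' ∧
          ¬ ∃ i j : Fin m, f S ≤ f (s i) ∧ α * f (s i) < f (s j) ∧ f (s j) ≤ f S')
          ≤ pairPr n D (fun S S' => f S < f S') := by
        refine LBC.pairPr_mono D hD fun S S' hP => ?_
        have : f S ≤ α * f S := by nlinarith [hf S]
        linarith [hP.1]
      have hsym : pairPr n D (fun S S' => f S' < f S) = pairPr n D (fun S S' => f S < f S') :=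
        LBC.pairPr_swap D _
      have hsum : pairPr n D (fun S S' => f S < f S')
          + pairPr n D (fun S S' => f S' < f S) ≤ 1 := by
        have hle : ∀ S S' : Finset (Fin n),
            (if f S < f S' then D S * D S' else 0) + (if f S' < f S then D S * D S' else 0)
            ≤ D S * D S' := by
          intro S S'
          have hDD : 0 ≤ D S * D S' := mul_nonneg (hD S) (hD S')
          by_cases h1 : f S < f S'
          · have h2 : ¬ f S' < f S := by linarith
            simp [h1, h2]
          · simp only [h1, if_false, zero_add]
            split
            · exact le_rfl
            · exact hDD
        calc pairPr n D (fun S S' => f S < f S') + pairPr n D (fun S S' => f S' < f S)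
            = ∑ S : Finset (Fin n), ∑ S' : Finset (Fin n),
              ((if f S < f S' then D S * D S' else 0) + (if f S' < f S then D S * D S' else 0)) := by
              unfold pairPr
              rw [← Finset.sum_add_distrib]
              exact Finset.sum_congr rfl fun S _ => by rw [← Finset.sum_add_distrib]
          _ ≤ ∑ S : Finset (Fin n), ∑ S' : Finset (Fin n), D S * D S' :=
              Finset.sum_le_sum fun S _ => Finset.sum_le_sum fun S' _ => hle S S'
          _ = (∑ S : Finset (Fin n), D S) * (∑ S' : Finset (Fin n), D S') :=
              (Finset.sum_mul_sum _ _ _ _).symm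
          _ = 1 := by rw [hD1, mul_one]
      linarith
    calc 1 - δ ≤ 1 := by linarith
      _ = samplePr n m D (fun _ => True) := (LBC.samplePr_true m D hD1).symm
      _ ≤ samplePr n m D (fun s => pairPr n D (fun S S' =>
            α * f S < f S' ∧
            ¬ ∃ i j : Fin m, f S ≤ f (s i) ∧ α * f (s i) < f (s j) ∧ f (s j) ≤ f S') ≤ ε) :=
          LBC.samplePr_mono m D hD fun s _ => htriv s
  · push_neg at hhalf
    have hη0 : (0:ℝ) < ε / 32 := by linarith
    set η := ε / 32 with hη
    set J := ⌊(1:ℝ)/η⌋₊ with hJdef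
    set R := ⌈(2:ℝ)/ε⌉₊ with hRdef
    have hRe : 1 ≤ (R:ℝ) * (ε/2) := by
      have h1 : (2:ℝ)/ε ≤ (R:ℝ) := Nat.le_ceil _
      calc (1:ℝ) = (2/ε) * (ε/2) := by field_simp
        _ ≤ (R:ℝ) * (ε/2) := mul_le_mul_of_nonneg_right h1 (by linarith)
    have hRe2 : (R:ℝ) * (ε/2) ≤ 2 := by
      have h2 : (R:ℝ) < 2/ε + 1 := Nat.ceil_lt_add_one (by positivity)
      have h3 : (R:ℝ) * (ε/2) < (2/ε + 1) * (ε/2) := by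
        apply mul_lt_mul_of_pos_right h2 (by linarith)
      have he : (2/ε + 1) * (ε/2) = 1 + ε/2 := by field_simp
      rw [he] at h3
      linarith
    have hJprop : ∀ j : ℕ, (j:ℝ) * η < 1 → j ≤ J := by
      intro j hj
      apply Nat.le_floor
      rw [le_div_iff₀ hη0]
      linarith
    have hJη : (J:ℝ) * η ≤ 1 := by
      have h1 : (J:ℝ) ≤ 1/η := Nat.floor_le (by positivity)
      calc (J:ℝ) * η ≤ (1/η) * η := mul_le_mul_of_nonneg_right h1 hη0.le
        _ = 1 := by field_simp
    have hkey : ∀ s : Fin m → Finset (Fin n), LBC.Good f D η J m s →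
        pairPr n D (fun S S' =>
          α * f S < f S' ∧
          ¬ ∃ i j : Fin m, f S ≤ f (s i) ∧ α * f (s i) < f (s j) ∧ f (s j) ≤ f S') ≤ ε := by
      intro s hgood
      have hnet := LBC.good_implies_net f D hD hD1 η hη0 J hJprop m s hgood
      have hb := LBC.net_bound f D hf hD hD1 α hα m s (4*η) (ε/2)
        (by linarith) (by linarith) R hRe hnet
      have hmul : (R:ℝ) * (ε/2) * (4*η) ≤ 2 * (4*η) :=
        mul_le_mul_of_nonneg_right hRe2 (by linarith)
      calc pairPr n D (fun S S' =>
          α * f S < f S' ∧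
          ¬ ∃ i j : Fin m, f S ≤ f (s i) ∧ α * f (s i) < f (s j) ∧ f (s j) ≤ f S')
          ≤ ε/2 + (R:ℝ) * (ε/2) * (4*η) + 4*η := hb
        _ ≤ ε/2 + 2*(4*η) + 4*η := by linarith
        _ ≤ ε := by rw [hη]; linarith
    -- probability of the good event
    have hprob := LBC.good_prob f D hD hD1 η hη0 (by rw [hη]; linarith) J hJη m
    -- numeric bound : J * (1-η)^m ≤ δ
    set L := Real.log (1/(ε*δ)) with hLdef
    have hεδ : (0:ℝ) < ε * δ := by positivity
    have hεδhalf : ε * δ < 1/2 := by nlinarith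
    have hL2 : Real.log 2 ≤ L := by
      rw [hLdef]
      apply Real.log_le_log (by norm_num)
      rw [le_div_iff₀ hεδ]
      linarith
    have hlog2 : (0:ℝ) < Real.log 2 := Real.log_pos (by norm_num)
    have hL0 : 0 < L := lt_of_lt_of_le hlog2 hL2
    have hlog32 : Real.log 32 = 5 * Real.log 2 := by
      have h32 : (32:ℝ) = 2^(5:ℕ) := by norm_num
      rw [h32, Real.log_pow]
      push_cast
      ring
    have hstep : (1000/32) * L ≤ η * (m:ℝ) := by
      have h1 := mul_le_mul_of_nonneg_left hm (le_of_lt hη0)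
      calc (1000/32) * L = (ε/32) * (1000 * (1/ε) * L) := by field_simp
        _ ≤ (ε/32) * (m:ℝ) := h1
        _ = η * (m:ℝ) := by rw [hη]
    have hm2 : L + Real.log 32 ≤ η * (m:ℝ) := by
      rw [hlog32]
      linarith
    have hexp3 : Real.exp (-(η * (m:ℝ))) ≤ ε * δ / 32 := by
      have h2 : Real.log (ε*δ/32) = Real.log (ε*δ) - Real.log 32 :=
        Real.log_div (by positivity) (by norm_num)
      have h3 : Real.log (ε*δ) = -L := by
        rw [hLdef, one_div, Real.log_inv, neg_neg]
      have h1 : -(η*(m:ℝ)) ≤ Real.log (ε*δ/32) := by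
        rw [h2, h3]
        linarith
      calc Real.exp (-(η*(m:ℝ))) ≤ Real.exp (Real.log (ε*δ/32)) := Real.exp_le_exp.mpr h1
        _ = ε*δ/32 := Real.exp_log (by positivity)
    have hfinal : (J:ℝ) * (1-η)^m ≤ δ := by
      have hη1 : η ≤ 1 := by rw [hη]; linarith
      have hJle : (J:ℝ) ≤ 1/η := Nat.floor_le (by positivity)
      have hexpand : (1-η)^m ≤ Real.exp (-(η * (m:ℝ))) := by
        calc (1-η)^m ≤ Real.exp (-η) ^ m := by
              refine pow_le_pow_left₀ (by linarith) ?_ m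
              linarith [Real.add_one_le_exp (-η)]
          _ = Real.exp (-(η * (m:ℝ))) := by
              rw [← Real.exp_nat_mul]
              ring_nf
      have hb1 : (J:ℝ) * (1-η)^m ≤ (1/η) * Real.exp (-(η * (m:ℝ))) := by
        apply mul_le_mul hJle hexpand (pow_nonneg (by linarith) m) (by positivity)
      calc (J:ℝ) * (1-η)^m ≤ (1/η) * Real.exp (-(η * (m:ℝ))) := hb1
        _ ≤ (1/η) * (ε*δ/32) := mul_le_mul_of_nonneg_left hexp3 (by positivity)
        _ = δ := by rw [hη]; field_simp
    calc 1 - δ ≤ 1 - (J:ℝ) * (1-η)^m := by linarith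
      _ ≤ samplePr n m D (fun s => LBC.Good f D η J m s) := hprob
      _ ≤ samplePr n m D (fun s => pairPr n D (fun S S' =>
            α * f S < f S' ∧
            ¬ ∃ i j : Fin m, f S ≤ f (s i) ∧ α * f (s i) < f (s j) ∧ f (s j) ≤ f S') ≤ ε) :=
          LBC.samplePr_mono m D hD fun s hs => hkey s hs
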